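/- Let 𝒟 := {g ∈ L^û(P) : E[u(g)] > -∞}. Let f ∈ L^û(P) with f ≤ 0 P-a.s. and E[u(f)] > -∞. Then f belongs to the interior of 𝒟 with respect to the Luxemburg norm N_û if and only if there exists ε > 0 such that E[u((1+ε)f)] > -∞. -/

import Mathlib

open MeasureTheory Filter Set Topology
open scoped ENNReal

set_option maxHeartbeats 1000000

noncomputable section

/-- The positive part of an extended real number, as an element of `ℝ≥0∞`. -/
def EReal.toENN (x : EReal) : ℝ≥0∞ := if x = ⊤ then ⊤ else ENNReal.ofReal x.toReal

section Aux
variable {a : EReal} {u : ℝ → EReal} {uhat : ℝ → ℝ≥0∞}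

lemma toENN_coe (r : ℝ) : (r : EReal).toENN = ENNReal.ofReal r := by simp [EReal.toENN]

lemma toENN_top : (⊤ : EReal).toENN = ⊤ := by simp [EReal.toENN]

lemma toENN_mono : Monotone EReal.toENN := by
  intro x y h
  rcases eq_or_ne y ⊤ with rfl | hy
  · simp [toENN_top]
  rcases eq_or_ne x ⊥ with rfl | hx
  · simp [EReal.toENN]
  have hxt : x ≠ ⊤ := fun hx' => hy (top_le_iff.1 (hx' ▸ h))
  rw [EReal.toENN, EReal.toENN, if_neg hxt, if_neg hy]
  exact ENNReal.ofReal_le_ofReal (EReal.toReal_le_toReal h hx hy)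

/-- `û x = ⊤` when `u (-|x|) = ⊥`. -/
lemma uhat_top (huhat : ∀ x : ℝ, uhat x = (u 0 - u (-|x|)).toENN) (h0b : u 0 ≠ ⊥)
    {x : ℝ} (h : u (-|x|) = ⊥) : uhat x = ⊤ := by
  rw [huhat, h, EReal.sub_bot h0b, toENN_top]

/-- `û x` as `ofReal` of a real difference when `u (-|x|)` is finite. -/
lemma uhat_eq (huhat : ∀ x : ℝ, uhat x = (u 0 - u (-|x|)).toENN)
    (h0b : u 0 ≠ ⊥) (h0t : u 0 ≠ ⊤) (hut : ∀ y : ℝ, u y ≠ ⊤)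
    {x : ℝ} (h : u (-|x|) ≠ ⊥) :
    uhat x = ENNReal.ofReal ((u 0).toReal - (u (-|x|)).toReal) := by
  rw [huhat]
  rw [← EReal.coe_toReal h0t h0b, ← EReal.coe_toReal (hut (-|x|)) h, ← EReal.coe_sub, toENN_coe]
  simp

/-- monotonicity of `û` in the absolute value. -/
lemma uhat_mono (huhat : ∀ x : ℝ, uhat x = (u 0 - u (-|x|)).toENN) (hu_mono : Monotone u)
    {x y : ℝ} (h : |x| ≤ |y|) : uhat x ≤ uhat y := by
  rw [huhat, huhat]
  exact toENN_mono (EReal.sub_le_sub le_rfl (hu_mono (by linarith)))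

lemma uhat_meas (huhat : ∀ x : ℝ, uhat x = (u 0 - u (-|x|)).toENN)
    (h0b : u 0 ≠ ⊥) (h0t : u 0 ≠ ⊤) (hut : ∀ y : ℝ, u y ≠ ⊤)
    (humeas : Measurable u) : Measurable uhat := by
  have hm1 : Measurable fun s : ℝ => u (-|s|) := humeas.comp (measurable_abs.neg)
  have heq : uhat = fun s => if u (-|s|) = ⊥ then (⊤ : ℝ≥0∞)
      else ENNReal.ofReal ((u 0).toReal - (u (-|s|)).toReal) := by
    funext s
    by_cases hb : u (-|s|) = ⊥
    · rw [if_pos hb, uhat_top huhat h0b hb]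
    · rw [if_neg hb, uhat_eq huhat h0b h0t hut hb]
  rw [heq]
  have hset : MeasurableSet {s : ℝ | u (-|s|) = ⊥} := hm1 (measurableSet_singleton ⊥)
  exact Measurable.ite hset measurable_const
    ((measurable_const.sub hm1.ereal_toReal).ennreal_ofReal)
end Aux


section Aux2
variable {a : EReal} {u : ℝ → EReal} {uhat : ℝ → ℝ≥0∞}

/-- Linear lower bound for `û` away from the origin. -/
lemma auxA (ha : a < 0)
    (hu_ne_top : ∀ x : ℝ, u x ≠ ⊤)
    (hu_bot : ∀ x : ℝ, (x : EReal) < a → u x = ⊥)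
    (hu_fin : ∀ x : ℝ, a < (x : EReal) → u x ≠ ⊥)
    (hu_mono : Monotone u)
    (hu_conc : ∀ x y t : ℝ, a < (x : EReal) → a < (y : EReal) → 0 ≤ t → t ≤ 1 →
      ((t * (u x).toReal + (1 - t) * (u y).toReal : ℝ) : EReal) ≤ u (t * x + (1 - t) * y))
    (hu_lim : Tendsto u atBot (𝓝 ⊥))
    (huhat : ∀ x : ℝ, uhat x = (u 0 - u (-|x|)).toENN) :
    ∃ x₀ : ℝ, 0 < x₀ ∧
      ∀ s : ℝ, ENNReal.ofReal |s| ≤ ENNReal.ofReal x₀ + ENNReal.ofReal x₀ * uhat s := by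
  have h0b : u 0 ≠ ⊥ := hu_fin 0 ha
  have h0t : u 0 ≠ ⊤ := hu_ne_top 0
  by_cases hcase : ∃ x₀ : ℝ, 0 < x₀ ∧ a < ((-x₀ : ℝ) : EReal) ∧ u (-x₀) ≤ u 0 - 1
  · obtain ⟨x₀, hx₀, hax₀, hux₀⟩ := hcase
    have hx0b : u (-x₀) ≠ ⊥ := hu_fin _ hax₀
    have hx0t : u (-x₀) ≠ ⊤ := hu_ne_top _
    have hreal : (u (-x₀)).toReal ≤ (u 0).toReal - 1 := by
      have h1 : u 0 - 1 = (((u 0).toReal - 1 : ℝ) : EReal) := by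
        rw [← EReal.coe_toReal h0t h0b]
        norm_cast
      rw [h1, ← EReal.coe_toReal hx0t hx0b, EReal.coe_le_coe_iff] at hux₀
      exact hux₀
    -- C1
    have C1 : ∀ t : ℝ, x₀ ≤ t → a < ((-t : ℝ) : EReal) →
        t / x₀ ≤ (u 0).toReal - (u (-t)).toReal := by
      intro t ht hat
      have ht0 : 0 < t := lt_of_lt_of_le hx₀ ht
      set θ := x₀ / t with hθdef
      have hθ0 : 0 < θ := by positivity
      have hθ1 : θ ≤ 1 := by rw [hθdef, div_le_one ht0]; exact ht
      have hconc := hu_conc (-t) 0 θ hat ha hθ0.le hθ1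
      have hcomb : θ * (-t) + (1 - θ) * 0 = -x₀ := by
        rw [hθdef]; field_simp; ring
      rw [hcomb] at hconc
      rw [← EReal.coe_toReal hx0t hx0b, EReal.coe_le_coe_iff] at hconc
      have htb : u (-t) ≠ ⊥ := hu_fin _ hat
      set A := (u (-t)).toReal
      set B := (u 0).toReal
      have key : θ * (B - A) ≥ 1 := by nlinarith
      have : B - A ≥ 1 / θ := by
        rw [ge_iff_le, div_le_iff₀ hθ0]; nlinarith
      have hdiv : 1 / θ = t / x₀ := by rw [hθdef, one_div_div]
      linarith [hdiv ▸ this]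
    -- C2
    have C2 : ∀ t : ℝ, x₀ ≤ t → u (-t) ≠ ⊥ →
        t / x₀ ≤ (u 0).toReal - (u (-t)).toReal := by
      intro t ht hbot
      rcases lt_or_ge a ((-t : ℝ) : EReal) with hat | hat
      · exact C1 t ht hat
      · have hat' : ¬ (((-t : ℝ) : EReal) < a) := fun hc => hbot (hu_bot _ hc)
        have heq : a = ((-t : ℝ) : EReal) := le_antisymm (not_lt.1 hat') hat
        have hx₀t : x₀ < t := by
          have := heq ▸ hax₀
          rw [EReal.coe_lt_coe_iff] at this
          linarith
        have key : ∀ s : ℝ, s < t / x₀ → s ≤ (u 0).toReal - (u (-t)).toReal := by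
          intro s hs
          set t' := max x₀ (s * x₀) with ht'def
          have ht'1 : x₀ ≤ t' := le_max_left _ _
          have ht'2 : t' < t := by
            apply max_lt hx₀t
            rw [lt_div_iff₀ hx₀] at hs
            linarith
          have hat' : a < ((-t' : ℝ) : EReal) := by
            rw [heq, EReal.coe_lt_coe_iff]; linarith
          have h1 := C1 t' ht'1 hat'
          have hmono : (u (-t)).toReal ≤ (u (-t')).toReal :=
            EReal.toReal_le_toReal (hu_mono (by linarith)) hbot (hu_ne_top _)
          have hs' : s ≤ t' / x₀ := by
            rw [le_div_iff₀ hx₀]; exact le_max_right _ _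
          linarith
        by_contra hcon
        push_neg at hcon
        obtain ⟨s, h1, h2⟩ := exists_between hcon
        exact absurd (key s h2) (not_le.2 h1)
    refine ⟨x₀, hx₀, fun s => ?_⟩
    rcases le_or_gt |s| x₀ with hs | hs
    · exact le_trans (ENNReal.ofReal_le_ofReal hs) le_self_add
    · by_cases hb : u (-|s|) = ⊥
      · rw [uhat_top huhat h0b hb, ENNReal.mul_top (by simp [hx₀] : ENNReal.ofReal x₀ ≠ 0)]
        simp
      · have h2 := C2 |s| hs.le hb
        rw [uhat_eq huhat h0b h0t hu_ne_top hb]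
        have : ENNReal.ofReal |s| ≤ ENNReal.ofReal x₀ * ENNReal.ofReal (|s| / x₀) := by
          rw [← ENNReal.ofReal_mul hx₀.le, mul_div_cancel₀ _ hx₀.ne']
        refine le_trans this (le_trans ?_ le_add_self)
        exact mul_le_mul_right (ENNReal.ofReal_le_ofReal (le_trans (by linarith) h2)) _
  · push_neg at hcase
    have habot : a ≠ ⊥ := by
      intro hab
      have h1 : (⊥ : EReal) < u 0 - 1 := by
        rw [← EReal.coe_toReal h0t h0b]
        have : ((u 0).toReal : EReal) - 1 = (((u 0).toReal - 1 : ℝ) : EReal) := by norm_cast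
        rw [this]
        exact EReal.bot_lt_coe _
      have h2 : ∀ᶠ y in atBot, u y < u 0 - 1 :=
        hu_lim.eventually (Filter.Tendsto.eventually_lt_const h1 tendsto_id)
      obtain ⟨x, hx⟩ := eventually_atBot.1 h2
      set y := min x (-1) with hydef
      have hy1 : y ≤ -1 := min_le_right _ _
      have hc := hcase (-y) (by linarith) (by rw [hab, neg_neg]; exact EReal.bot_lt_coe _)
      rw [neg_neg] at hc
      exact absurd (hx y (min_le_left _ _)) (not_lt.2 hc.le)
    have hatop : a ≠ ⊤ := ne_top_of_lt ha
    set A := a.toReal with hAdef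
    have haA : a = (A : EReal) := (EReal.coe_toReal hatop habot).symm
    have hA0 : A < 0 := by
      have := ha
      rw [haA] at this
      exact_mod_cast this
    refine ⟨1 - A, by linarith, fun s => ?_⟩
    rcases lt_or_ge |s| (1 - A) with hs | hs
    · exact le_trans (ENNReal.ofReal_le_ofReal hs.le) le_self_add
    · have hb : u (-|s|) = ⊥ := hu_bot _ (by rw [haA, EReal.coe_lt_coe_iff]; linarith)
      rw [uhat_top huhat h0b hb,
        ENNReal.mul_top (ENNReal.ofReal_pos.2 (by linarith : (0:ℝ) < 1 - A)).ne']
      simp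

/-- Linear upper bound for `û` near the origin. -/
lemma auxB (ha : a < 0)
    (hu_ne_top : ∀ x : ℝ, u x ≠ ⊤)
    (hu_fin : ∀ x : ℝ, a < (x : EReal) → u x ≠ ⊥)
    (hu_mono : Monotone u)
    (hu_conc : ∀ x y t : ℝ, a < (x : EReal) → a < (y : EReal) → 0 ≤ t → t ≤ 1 →
      ((t * (u x).toReal + (1 - t) * (u y).toReal : ℝ) : EReal) ≤ u (t * x + (1 - t) * y))
    (huhat : ∀ x : ℝ, uhat x = (u 0 - u (-|x|)).toENN) :
    ∃ b K : ℝ, 0 < b ∧ 0 ≤ K ∧ ∀ s : ℝ, |s| ≤ b → uhat s ≤ ENNReal.ofReal (K * |s|) := by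
  have h0b : u 0 ≠ ⊥ := hu_fin 0 ha
  have h0t : u 0 ≠ ⊤ := hu_ne_top 0
  obtain ⟨c, hac, hc0⟩ := exists_between ha
  have hcb : c ≠ ⊥ := fun h => by simp [h] at hac
  have hct : c ≠ ⊤ := ne_top_of_lt hc0
  set b := -c.toReal with hbdef
  have hcc : c = ((-b : ℝ) : EReal) := by rw [hbdef, neg_neg, EReal.coe_toReal hct hcb]
  have hb : 0 < b := by
    rw [hcc] at hc0
    have : -b < 0 := by exact_mod_cast hc0
    linarith
  have hab : a < ((-b : ℝ) : EReal) := hcc ▸ hac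
  have hbb : u (-b) ≠ ⊥ := hu_fin _ hab
  have hbt : u (-b) ≠ ⊤ := hu_ne_top _
  set K := ((u 0).toReal - (u (-b)).toReal) / b with hKdef
  have hKnum : 0 ≤ (u 0).toReal - (u (-b)).toReal :=
    sub_nonneg.2 (EReal.toReal_le_toReal (hu_mono (by linarith)) hbb h0t)
  have hK : 0 ≤ K := div_nonneg hKnum hb.le
  refine ⟨b, K, hb, hK, fun s hs => ?_⟩
  set τ := |s| with hτdef
  have hτ0 : 0 ≤ τ := abs_nonneg s
  have haτ : a < ((-τ : ℝ) : EReal) := lt_of_lt_of_le hab (EReal.coe_le_coe_iff.2 (by linarith))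
  have hτb : u (-τ) ≠ ⊥ := hu_fin _ haτ
  have hθ1 : τ / b ≤ 1 := by rw [div_le_one hb]; exact hs
  have hconc := hu_conc (-b) 0 (τ / b) hab ha (by positivity) hθ1
  have hcomb : (τ / b) * (-b) + (1 - τ / b) * 0 = -τ := by field_simp; ring
  rw [hcomb, ← EReal.coe_toReal (hu_ne_top (-τ)) hτb, EReal.coe_le_coe_iff] at hconc
  rw [uhat_eq huhat h0b h0t hu_ne_top hτb]
  apply ENNReal.ofReal_le_ofReal
  have hKb : K * τ = (τ / b) * ((u 0).toReal - (u (-b)).toReal) := by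
    rw [hKdef]; field_simp
  rw [← hτdef, hKb]
  nlinarith [hconc]

/-- Linear upper bound for `u` on the nonnegative axis. -/
lemma auxC (ha : a < 0)
    (hu_ne_top : ∀ x : ℝ, u x ≠ ⊤)
    (hu_fin : ∀ x : ℝ, a < (x : EReal) → u x ≠ ⊥)
    (hu_mono : Monotone u)
    (hu_conc : ∀ x y t : ℝ, a < (x : EReal) → a < (y : EReal) → 0 ≤ t → t ≤ 1 →
      ((t * (u x).toReal + (1 - t) * (u y).toReal : ℝ) : EReal) ≤ u (t * x + (1 - t) * y)) :
    ∃ K : ℝ, 0 ≤ K ∧ ∀ x : ℝ, 0 ≤ x →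
      (u x).toReal ≤ (u 0).toReal + K + K * x := by
  have h0b : u 0 ≠ ⊥ := hu_fin 0 ha
  have h0t : u 0 ≠ ⊤ := hu_ne_top 0
  have ha1 : a < ((1 : ℝ) : EReal) := lt_trans ha (by exact_mod_cast zero_lt_one)
  have h1b : u 1 ≠ ⊥ := hu_fin _ ha1
  set K := (u 1).toReal - (u 0).toReal with hKdef
  have hK : 0 ≤ K := sub_nonneg.2 (EReal.toReal_le_toReal (hu_mono zero_le_one) h0b (hu_ne_top _))
  refine ⟨K, hK, fun x hx => ?_⟩
  have hax : a < ((x : ℝ) : EReal) := lt_of_lt_of_le ha (by exact_mod_cast hx)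
  have hxb : u x ≠ ⊥ := hu_fin _ hax
  rcases le_or_gt x 1 with hx1 | hx1
  · have h1 : (u x).toReal ≤ (u 1).toReal :=
      EReal.toReal_le_toReal (hu_mono hx1) hxb (hu_ne_top _)
    nlinarith
  · have hconc := hu_conc x 0 (1 / x) hax ha (by positivity) (by
      rw [div_le_one (by linarith)]; linarith)
    have hcomb : (1 / x) * x + (1 - 1 / x) * 0 = 1 := by field_simp; ring
    rw [hcomb, ← EReal.coe_toReal (hu_ne_top 1) h1b, EReal.coe_le_coe_iff] at hconc
    have hx0 : 0 < x := by linarith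
    have h2 : (1/x) * ((u x).toReal - (u 0).toReal) ≤ K := by nlinarith
    have h3 := mul_le_mul_of_nonneg_right h2 hx0.le
    have h4 : (u x).toReal - (u 0).toReal ≤ K * x := by
      calc (u x).toReal - (u 0).toReal = 1 / x * ((u x).toReal - (u 0).toReal) * x := by
            field_simp
        _ ≤ K * x := h3
    nlinarith

/-- For any Orlicz-space element the Luxemburg ball set is non-empty. -/
lemma auxNE {Ω : Type*} [MeasurableSpace Ω] (P : Measure Ω) [IsProbabilityMeasure P]
    (uhat : ℝ → ℝ≥0∞) (hm : Measurable uhat)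
    (hmono : ∀ x y : ℝ, |x| ≤ |y| → uhat x ≤ uhat y)
    (b K : ℝ) (hb : 0 < b) (hBK : ∀ s : ℝ, |s| ≤ b → uhat s ≤ ENNReal.ofReal (K * |s|))
    (h : Ω → ℝ) (hh : Measurable h)
    (α : ℝ) (hα : 0 < α) (hfin : ∫⁻ ω, uhat (α * h ω) ∂P < ⊤) :
    ∃ c : ℝ, 0 < c ∧ ∫⁻ ω, uhat (h ω / c) ∂P ≤ 1 := by
  set n₀ : ℝ := max 1 (1/α) with hn₀def
  have hn₀1 : 1 ≤ n₀ := le_max_left _ _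
  have hn₀α : 1/α ≤ n₀ := le_max_right _ _
  have hn₀0 : 0 < n₀ := lt_of_lt_of_le zero_lt_one hn₀1
  set F : ℕ → Ω → ℝ≥0∞ := fun n ω => uhat (h ω / ((n : ℝ) + n₀)) with hFdef
  have hFmeas : ∀ n, Measurable (F n) := fun n => hm.comp (hh.div_const _)
  have hden : ∀ n : ℕ, 0 < (n : ℝ) + n₀ := fun n => by positivity
  have hFbound : ∀ n, F n ≤ᵐ[P] fun ω => uhat (α * h ω) := by
    intro n
    refine Filter.Eventually.of_forall fun ω => ?_
    apply hmono
    rw [abs_div, abs_of_pos (hden n), abs_mul, abs_of_pos hα, div_le_iff₀ (hden n)]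
    have h1 : 1 ≤ α * ((n : ℝ) + n₀) := by
      have : 1/α ≤ (n : ℝ) + n₀ := le_trans hn₀α (by linarith [Nat.cast_nonneg (α := ℝ) n])
      rw [div_le_iff₀ hα] at this
      linarith
    nlinarith [abs_nonneg (h ω)]
  have hFlim : ∀ᵐ ω ∂P, Tendsto (fun n => F n ω) atTop (𝓝 0) := by
    refine Filter.Eventually.of_forall fun ω => ?_
    set C := |h ω| with hCdef
    have hC0 : 0 ≤ C := abs_nonneg _
    have hdiv : Tendsto (fun n : ℕ => C / ((n : ℝ) + n₀)) atTop (𝓝 0) := by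
      have h1 : Tendsto (fun n : ℕ => (n : ℝ) + n₀) atTop atTop :=
        tendsto_natCast_atTop_atTop.atTop_add tendsto_const_nhds
      have h2 := (tendsto_inv_atTop_zero.comp h1).const_mul C
      simpa [div_eq_mul_inv, mul_zero] using h2
    have hdiv2 : Tendsto (fun n : ℕ => ENNReal.ofReal (K * (C / ((n : ℝ) + n₀)))) atTop (𝓝 0) := by
      have := ENNReal.tendsto_ofReal (hdiv.const_mul K)
      simpa [mul_zero] using this
    rw [ENNReal.tendsto_nhds_zero]
    intro ε hε
    filter_upwards [ENNReal.tendsto_nhds_zero.1 hdiv2 ε hε,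
      hdiv.eventually_lt_const hb] with n h1 h2
    have habs : |h ω / ((n : ℝ) + n₀)| = C / ((n : ℝ) + n₀) := by
      rw [abs_div, abs_of_pos (hden n)]
    refine le_trans ?_ h1
    have hle : F n ω ≤ ENNReal.ofReal (K * |h ω / ((n : ℝ) + n₀)|) :=
      hBK _ (by rw [habs]; exact h2.le)
    rw [habs] at hle
    exact hle
  have hmain := tendsto_lintegral_of_dominated_convergence _ hFmeas hFbound hfin.ne hFlim
  rw [lintegral_zero] at hmain
  obtain ⟨n, hn⟩ := (hmain.eventually_lt_const (zero_lt_one : (0:ℝ≥0∞) < 1)).exists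
  exact ⟨(n : ℝ) + n₀, hden n, hn.le⟩
end Aux2


/-- Lemma 30.  Let `𝒟 = {g ∈ L^û : E[u(g)] > -∞}` and let `f ∈ L^û` with
`f ≤ 0` `P`-a.s. and `E[u(f)] > -∞`.  Then `f` belongs to the `N_û`-interior of `𝒟` iff
there exists `ε > 0` with `E[u((1+ε)f)] > -∞`. -/
theorem statement7
    {Ω : Type*} [MeasurableSpace Ω] (P : Measure Ω) [IsProbabilityMeasure P]
    (a : EReal) (ha : a < 0)
    (u : ℝ → EReal)
    (hu_ne_top : ∀ x : ℝ, u x ≠ ⊤)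
    (hu_bot : ∀ x : ℝ, (x : EReal) < a → u x = ⊥)
    (hu_fin : ∀ x : ℝ, a < (x : EReal) → u x ≠ ⊥)
    (hu_mono : Monotone u)
    (hu_conc : ∀ x y t : ℝ, a < (x : EReal) → a < (y : EReal) → 0 ≤ t → t ≤ 1 →
      ((t * (u x).toReal + (1 - t) * (u y).toReal : ℝ) : EReal) ≤ u (t * x + (1 - t) * y))
    (hu_lim : Tendsto u atBot (𝓝 ⊥))
    -- the Young function `û(x) = -u(-|x|) + u(0)`
    (uhat : ℝ → ℝ≥0∞)
    (huhat : ∀ x : ℝ, uhat x = (u 0 - u (-|x|)).toENN)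
    -- the Luxemburg norm
    (Nu : (Ω → ℝ) → ℝ)
    (hNu : ∀ f : Ω → ℝ, Nu f = sInf {c : ℝ | 0 < c ∧ ∫⁻ ω, uhat (f ω / c) ∂P ≤ 1})
    -- the Orlicz space `L^û(P)`
    (LU : Set (Ω → ℝ))
    (hLU : ∀ f : Ω → ℝ, f ∈ LU ↔
      Measurable f ∧ ∃ α : ℝ, 0 < α ∧ ∫⁻ ω, uhat (α * f ω) ∂P < ⊤)
    -- the proper domain `𝒟 = {g ∈ L^û : E[u(g)] > -∞}` of `I_u`
    (D : Set (Ω → ℝ))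
    (hD : ∀ f : Ω → ℝ, f ∈ D ↔ f ∈ LU ∧
      ∃ g : Ω → ℝ, Integrable g P ∧ ∀ᵐ ω ∂P, u (f ω) = (g ω : EReal))
    (f : Ω → ℝ) (hfLU : f ∈ LU) (hf_le : ∀ᵐ ω ∂P, f ω ≤ 0) (hfD : f ∈ D) :
    (∃ r : ℝ, 0 < r ∧ ∀ g ∈ LU, Nu (g - f) < r → g ∈ D) ↔
      ∃ ε : ℝ, 0 < ε ∧ (fun ω => (1 + ε) * f ω) ∈ D := by
  have h0b : u 0 ≠ ⊥ := hu_fin 0 ha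
  have h0t : u 0 ≠ ⊤ := hu_ne_top 0
  have humeas : Measurable u := hu_mono.measurable
  have huhm : Measurable uhat := uhat_meas huhat h0b h0t hu_ne_top humeas
  have huhmono : ∀ x y : ℝ, |x| ≤ |y| → uhat x ≤ uhat y := fun x y h =>
    uhat_mono huhat hu_mono h
  obtain ⟨x₀, hx₀, hA⟩ := auxA ha hu_ne_top hu_bot hu_fin hu_mono hu_conc hu_lim huhat
  obtain ⟨b, K₁, hb, hK₁, hB⟩ := auxB ha hu_ne_top hu_fin hu_mono hu_conc huhat
  obtain ⟨K₂, hK₂, hC⟩ := auxC ha hu_ne_top hu_fin hu_mono hu_conc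
  have hfmeas : Measurable f := ((hLU f).1 hfLU).1
  have hne : ∀ h : Ω → ℝ, Measurable h → (∃ α : ℝ, 0 < α ∧ ∫⁻ ω, uhat (α * h ω) ∂P < ⊤) →
      ∃ c : ℝ, 0 < c ∧ ∫⁻ ω, uhat (h ω / c) ∂P ≤ 1 := by
    rintro h hm ⟨α, hα, hfin⟩
    exact auxNE P uhat huhm huhmono b K₁ hb hB h hm α hα hfin
  constructor
  · rintro ⟨r, hr, hball⟩
    obtain ⟨c₀, hc₀, hc₀1⟩ := hne f hfmeas ((hLU f).1 hfLU).2
    set ε := min 1 (r / (2 * c₀)) with hεdef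
    have hε : 0 < ε := lt_min zero_lt_one (by positivity)
    have hε1 : ε ≤ 1 := min_le_left _ _
    set g : Ω → ℝ := fun ω => (1 + ε) * f ω with hgdef
    have hgLU : g ∈ LU := by
      rw [hLU]
      obtain ⟨_, α, hα, hfin⟩ := (hLU f).1 hfLU
      refine ⟨measurable_const.mul hfmeas, α / (1 + ε), by positivity, ?_⟩
      have : ∀ ω, α / (1 + ε) * g ω = α * f ω := fun ω => by
        rw [hgdef]; field_simp
      simp only [this]
      exact hfin
    have hlt : Nu (g - f) < r := by
      rw [hNu]
      have hgf : ∀ ω, (g - f) ω = ε * f ω := fun ω => by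
        simp [hgdef, Pi.sub_apply]; ring
      have hmem : ε * c₀ ∈ {c : ℝ | 0 < c ∧ ∫⁻ ω, uhat ((g - f) ω / c) ∂P ≤ 1} := by
        refine ⟨by positivity, ?_⟩
        have : ∀ ω, (g - f) ω / (ε * c₀) = f ω / c₀ := fun ω => by
          rw [hgf ω, mul_div_mul_left _ _ hε.ne']
        simp only [this]
        exact hc₀1
      have hbdd : BddBelow {c : ℝ | 0 < c ∧ ∫⁻ ω, uhat ((g - f) ω / c) ∂P ≤ 1} :=
        ⟨0, fun x hx => hx.1.le⟩
      refine lt_of_le_of_lt (csInf_le hbdd hmem) ?_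
      have h2 : ε ≤ r / (2 * c₀) := min_le_right _ _
      rw [le_div_iff₀ (by positivity : (0:ℝ) < 2 * c₀)] at h2
      nlinarith
    exact ⟨ε, hε, hball g hgLU hlt⟩
  · rintro ⟨ε, hε, hεD⟩
    set δ := ε / 2 with hδdef
    have hδ : 0 < δ := by positivity
    have hδε : δ < ε := by rw [hδdef]; linarith
    obtain ⟨hεLU, φ, hφint, hφae⟩ := (hD _).1 hεD
    have hae1 : ∀ᵐ ω ∂P, a < (((1 + δ) * f ω : ℝ) : EReal) := by
      filter_upwards [hφae, hf_le] with ω h1 h2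
      have hεa : a ≤ (((1 + ε) * f ω : ℝ) : EReal) := by
        by_contra hcon
        push_neg at hcon
        rw [hu_bot _ hcon] at h1
        exact (EReal.bot_ne_coe _) h1
      rcases eq_or_lt_of_le h2 with h0 | h0
      · simpa [h0] using ha
      · refine lt_of_le_of_lt hεa (EReal.coe_lt_coe_iff.2 ?_)
        nlinarith
    set ψ : Ω → ℝ := fun ω => (u ((1 + δ) * f ω)).toReal with hψdef
    have hψmeas : Measurable ψ := (humeas.comp (measurable_const.mul hfmeas)).ereal_toReal
    have hψae : ∀ᵐ ω ∂P, u ((1 + δ) * f ω) = (ψ ω : EReal) :=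
      hae1.mono fun ω h => (EReal.coe_toReal (hu_ne_top _) (hu_fin _ h)).symm
    have hψbound : ∀ᵐ ω ∂P, φ ω ≤ ψ ω ∧ ψ ω ≤ (u 0).toReal := by
      filter_upwards [hφae, hf_le, hae1] with ω h1 h2 h3
      have hb1 : u ((1 + ε) * f ω) ≤ u ((1 + δ) * f ω) := hu_mono (by
        nlinarith [mul_nonneg (by linarith : (0:ℝ) ≤ ε - δ) (by linarith : (0:ℝ) ≤ -f ω)])
      have hb2 : u ((1 + δ) * f ω) ≤ u 0 := hu_mono (by
        nlinarith [mul_nonneg (by linarith : (0:ℝ) ≤ 1 + δ) (by linarith : (0:ℝ) ≤ -f ω)])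
      constructor
      · rw [h1] at hb1
        have := EReal.toReal_le_toReal hb1 (EReal.coe_ne_bot _) (hu_ne_top _)
        simpa using this
      · exact EReal.toReal_le_toReal hb2 (hu_fin _ h3) h0t
    have hψint : Integrable ψ P := by
      refine Integrable.mono' (hφint.abs.add (integrable_const |(u 0).toReal|))
        hψmeas.aestronglyMeasurable ?_
      filter_upwards [hψbound] with ω hω
      simp only [Pi.add_apply]
      rw [Real.norm_eq_abs, abs_le]
      constructor
      · have := neg_abs_le (φ ω); have := abs_nonneg (u 0).toReal; linarith [hω.1]
      · have := le_abs_self (u 0).toReal; have := abs_nonneg (φ ω); linarith [hω.2]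
    refine ⟨δ / (1 + δ), by positivity, ?_⟩
    intro g hgLU hNg
    have hgmeas : Measurable g := ((hLU g).1 hgLU).1
    have hhmeas : Measurable (fun ω => g ω - f ω) := hgmeas.sub hfmeas
    -- g - f belongs to L^û
    have hhLU : ∃ α : ℝ, 0 < α ∧ ∫⁻ ω, uhat (α * (g ω - f ω)) ∂P < ⊤ := by
      obtain ⟨_, αf, hαf, hf1⟩ := (hLU f).1 hfLU
      obtain ⟨_, αg, hαg, hg1⟩ := (hLU g).1 hgLU
      refine ⟨min αf αg / 2, by positivity, ?_⟩
      set β := min αf αg / 2 with hβdef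
      have hβf : 2 * β ≤ αf := by rw [hβdef]; have := min_le_left αf αg; linarith
      have hβg : 2 * β ≤ αg := by rw [hβdef]; have := min_le_right αf αg; linarith
      have hβ0 : 0 < β := by rw [hβdef]; positivity
      have hpt : ∀ ω, uhat (β * (g ω - f ω)) ≤ uhat (αg * g ω) + uhat (αf * f ω) := by
        intro ω
        rcases le_total (αg * |g ω|) (αf * |f ω|) with hle | hle
        · refine le_trans (huhmono _ (αf * f ω) ?_) le_add_self
          have e1 : |β * (g ω - f ω)| = β * |g ω - f ω| := by
            rw [abs_mul, abs_of_pos hβ0]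
          have e2 : |αf * f ω| = αf * |f ω| := by
            rw [abs_mul, abs_of_pos hαf]
          rw [e1, e2]
          have habs := abs_sub (g ω) (f ω)
          nlinarith [mul_nonneg (by linarith : (0:ℝ) ≤ αg - 2*β) (abs_nonneg (g ω)),
            mul_nonneg (by linarith : (0:ℝ) ≤ αf - 2*β) (abs_nonneg (f ω)),
            mul_le_mul_of_nonneg_left habs hβ0.le]
        · refine le_trans (huhmono _ (αg * g ω) ?_) le_self_add
          have e1 : |β * (g ω - f ω)| = β * |g ω - f ω| := by
            rw [abs_mul, abs_of_pos hβ0]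
          have e2 : |αg * g ω| = αg * |g ω| := by
            rw [abs_mul, abs_of_pos hαg]
          rw [e1, e2]
          have habs := abs_sub (g ω) (f ω)
          nlinarith [mul_nonneg (by linarith : (0:ℝ) ≤ αg - 2*β) (abs_nonneg (g ω)),
            mul_nonneg (by linarith : (0:ℝ) ≤ αf - 2*β) (abs_nonneg (f ω)),
            mul_le_mul_of_nonneg_left habs hβ0.le]
      calc ∫⁻ ω, uhat (β * (g ω - f ω)) ∂P
          ≤ ∫⁻ ω, (uhat (αg * g ω) + uhat (αf * f ω)) ∂P := lintegral_mono hpt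
        _ = (∫⁻ ω, uhat (αg * g ω) ∂P) + ∫⁻ ω, uhat (αf * f ω) ∂P :=
            lintegral_add_left (huhm.comp (measurable_const.mul hgmeas)) _
        _ < ⊤ := ENNReal.add_lt_top.2 ⟨hg1, hf1⟩
    obtain ⟨c, hc, hcint, hcr⟩ : ∃ c : ℝ, 0 < c ∧
        (∫⁻ ω, uhat ((g ω - f ω) / c) ∂P ≤ 1) ∧ c < δ / (1 + δ) := by
      obtain ⟨c₁, hc₁, h1⟩ := hne (fun ω => g ω - f ω) hhmeas hhLU
      have hNg' : sInf {c : ℝ | 0 < c ∧ ∫⁻ ω, uhat ((g ω - f ω) / c) ∂P ≤ 1}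
          < δ / (1 + δ) := by
        have heq := hNu (g - f)
        simp only [Pi.sub_apply] at heq
        rw [← heq]
        exact hNg
      have hbdd : BddBelow {c : ℝ | 0 < c ∧ ∫⁻ ω, uhat ((g ω - f ω) / c) ∂P ≤ 1} :=
        ⟨0, fun x hx => hx.1.le⟩
      obtain ⟨c, hcmem, hclt⟩ := (csInf_lt_iff hbdd ⟨c₁, hc₁, h1⟩).1 hNg'
      exact ⟨c, hcmem.1, hcmem.2, hclt⟩
    have hfinint : ∫⁻ ω, uhat ((g ω - f ω) / c) ∂P < ⊤ := lt_of_le_of_lt hcint ENNReal.one_lt_top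
    have hmeas2 : Measurable fun ω => uhat ((g ω - f ω) / c) := huhm.comp (hhmeas.div_const c)
    have haefin : ∀ᵐ ω ∂P, uhat ((g ω - f ω) / c) < ⊤ := ae_lt_top hmeas2 hfinint.ne
    have haebot : ∀ᵐ ω ∂P, u (-|(g ω - f ω) / c|) ≠ ⊥ := by
      filter_upwards [haefin] with ω hω hcon
      rw [uhat_top huhat h0b hcon] at hω
      exact absurd hω (lt_irrefl _)
    set θ : Ω → ℝ := fun ω => (u 0).toReal - (u (-|(g ω - f ω) / c|)).toReal with hθdef
    have hθmeas : Measurable θ :=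
      measurable_const.sub ((humeas.comp ((hhmeas.div_const c).abs.neg)).ereal_toReal)
    have hθeq : ∀ᵐ ω ∂P, uhat ((g ω - f ω) / c) = ENNReal.ofReal (θ ω) := by
      filter_upwards [haebot] with ω hω
      exact uhat_eq huhat h0b h0t hu_ne_top hω
    have hθ0 : ∀ᵐ ω ∂P, 0 ≤ θ ω := by
      filter_upwards [haebot] with ω hω
      exact sub_nonneg.2 (EReal.toReal_le_toReal (hu_mono (neg_nonpos.2 (abs_nonneg _))) hω h0t)
    have hθint : Integrable θ P := by
      refine ⟨hθmeas.aestronglyMeasurable, ?_⟩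
      rw [hasFiniteIntegral_iff_norm]
      have heq2 : ∫⁻ ω, ENNReal.ofReal ‖θ ω‖ ∂P = ∫⁻ ω, uhat ((g ω - f ω) / c) ∂P := by
        apply lintegral_congr_ae
        filter_upwards [hθeq, hθ0] with ω h1 h2
        rw [Real.norm_eq_abs, abs_of_nonneg h2, h1]
      rw [heq2]
      exact hfinint
    have hhint : Integrable (fun ω => g ω - f ω) P := by
      refine ⟨hhmeas.aestronglyMeasurable, ?_⟩
      rw [hasFiniteIntegral_iff_norm]
      have step1 : ∫⁻ ω, ENNReal.ofReal |(g ω - f ω) / c| ∂P < ⊤ := by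
        calc ∫⁻ ω, ENNReal.ofReal |(g ω - f ω) / c| ∂P
            ≤ ∫⁻ ω, (ENNReal.ofReal x₀ + ENNReal.ofReal x₀ * uhat ((g ω - f ω) / c)) ∂P :=
              lintegral_mono fun ω => hA _
          _ = ENNReal.ofReal x₀ + ENNReal.ofReal x₀ * ∫⁻ ω, uhat ((g ω - f ω) / c) ∂P := by
              rw [lintegral_add_left measurable_const,
                lintegral_const_mul' _ _ ENNReal.ofReal_ne_top, lintegral_const,
                measure_univ, mul_one]
          _ < ⊤ := by
              refine ENNReal.add_lt_top.2 ⟨ENNReal.ofReal_lt_top, ?_⟩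
              exact ENNReal.mul_lt_top ENNReal.ofReal_lt_top hfinint
      have step2 : ∫⁻ ω, ENNReal.ofReal ‖g ω - f ω‖ ∂P
          = ENNReal.ofReal c * ∫⁻ ω, ENNReal.ofReal |(g ω - f ω) / c| ∂P := by
        rw [← lintegral_const_mul' _ _ ENNReal.ofReal_ne_top]
        refine lintegral_congr fun ω => ?_
        rw [Real.norm_eq_abs, abs_div, abs_of_pos hc, ← ENNReal.ofReal_mul hc.le]
        congr 1
        field_simp
      rw [step2]
      exact ENNReal.mul_lt_top ENNReal.ofReal_lt_top step1
    set t : ℝ := 1 / (1 + δ) with htdef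
    have ht0 : 0 < t := by positivity
    have ht1 : t ≤ 1 := by rw [htdef, div_le_one (by linarith)]; linarith
    set L : Ω → ℝ := fun ω => t * ψ ω + (1 - t) * ((u 0).toReal - θ ω) with hLdef
    have hLint : Integrable L P := (hψint.const_mul t).add
      (((integrable_const ((u 0).toReal)).sub hθint).const_mul (1 - t))
    set U : Ω → ℝ := fun ω => ((u 0).toReal + K₂) + K₂ * |g ω - f ω| with hUdef
    have hUint : Integrable U P :=
      (integrable_const ((u 0).toReal + K₂)).add (hhint.abs.const_mul K₂)
    set gg : Ω → ℝ := fun ω => (u (g ω)).toReal with hggdef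
    have hggmeas : Measurable gg := (humeas.comp hgmeas).ereal_toReal
    have hk1 : (1 + δ) / δ * c < 1 := by
      rw [div_mul_eq_mul_div, div_lt_one hδ]
      rw [lt_div_iff₀ (by linarith : (0:ℝ) < 1 + δ)] at hcr
      linarith
    have key : ∀ᵐ ω ∂P, u (g ω) = (gg ω : EReal) ∧ L ω ≤ gg ω ∧ gg ω ≤ U ω := by
      filter_upwards [hae1, hf_le, haebot, hψae] with ω hω1 hω2 hω3 hω4
      have hδ' : δ ≠ 0 := hδ.ne'
      have h1δ : (1:ℝ) + δ ≠ 0 := by positivity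
      set h := g ω - f ω with hhdef
      have hk0 : (0:ℝ) < (1 + δ) / δ := by positivity
      have hr2 : (1 + δ) / δ * |h| ≤ |h| / c := by
        rw [le_div_iff₀ hc]
        nlinarith [mul_le_mul_of_nonneg_right hk1.le (abs_nonneg h)]
      have hya : a < ((((1 + δ) / δ) * h : ℝ) : EReal) := by
        have hge : a ≤ ((-|h / c| : ℝ) : EReal) :=
          not_lt.1 fun hcon => hω3 (hu_bot _ hcon)
        rcases eq_or_ne h 0 with h0 | h0
        · rw [h0, mul_zero]
          simpa using ha
        · refine lt_of_le_of_lt hge (EReal.coe_lt_coe_iff.2 ?_)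
          have hr1 : (1 + δ) / δ * |h| < |h| / c := by
            rw [lt_div_iff₀ hc]
            nlinarith [mul_lt_mul_of_pos_right hk1 (abs_pos.2 h0)]
          have h1 := mul_le_mul_of_nonneg_left (neg_abs_le h) hk0.le
          rw [abs_div, abs_of_pos hc]
          linarith
      have hcomb : t * ((1 + δ) * f ω) + (1 - t) * ((1 + δ) / δ * h) = g ω := by
        rw [htdef, hhdef]
        field_simp
        ring
      have hconc := hu_conc ((1 + δ) * f ω) ((1 + δ) / δ * h) t hω1 hya ht0.le ht1
      rw [hcomb, hω4, EReal.toReal_coe] at hconc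
      have hy_lb : (u 0).toReal - θ ω ≤ (u ((1 + δ) / δ * h)).toReal := by
        have hmono : u (-|h / c|) ≤ u ((1 + δ) / δ * h) := hu_mono (by
          have h1 := mul_le_mul_of_nonneg_left (neg_abs_le h) hk0.le
          rw [abs_div, abs_of_pos hc]
          linarith)
        have h2 := EReal.toReal_le_toReal hmono hω3 (hu_ne_top _)
        simp only [hθdef]
        linarith
      have hgb : u (g ω) ≠ ⊥ := by
        intro hcon
        rw [hcon, le_bot_iff] at hconc
        exact EReal.coe_ne_bot _ hconc
      have hgeq : u (g ω) = (gg ω : EReal) := (EReal.coe_toReal (hu_ne_top _) hgb).symm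
      refine ⟨hgeq, ?_, ?_⟩
      · rw [hgeq, EReal.coe_le_coe_iff] at hconc
        have h3 := mul_le_mul_of_nonneg_left hy_lb (by linarith : (0:ℝ) ≤ 1 - t)
        simp only [hLdef]
        have h7 : t * ψ ω + (1 - t) * ((u 0).toReal - θ ω)
            ≤ t * ψ ω + (1 - t) * (u ((1 + δ) / δ * h)).toReal := by linarith
        exact le_trans h7 hconc
      · rcases le_total (g ω) 0 with hg0 | hg0
        · have h4 : u (g ω) ≤ u 0 := hu_mono hg0
          have h5 := EReal.toReal_le_toReal h4 hgb h0t
          have h6 : 0 ≤ K₂ * |h| := mul_nonneg hK₂ (abs_nonneg _)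
          simp only [hUdef, hggdef]
          rw [← hhdef]
          linarith
        · have h4 := hC (g ω) hg0
          have h5 : g ω ≤ |h| := by
            have heq3 : g ω = f ω + h := by rw [hhdef]; ring
            nlinarith [le_abs_self h]
          have h6 := mul_le_mul_of_nonneg_left h5 hK₂
          simp only [hUdef, hggdef]
          rw [← hhdef]
          linarith
    refine (hD g).2 ⟨hgLU, gg, ?_, key.mono fun ω hω => hω.1⟩
    refine Integrable.mono' (hLint.abs.add hUint.abs) hggmeas.aestronglyMeasurable ?_
    filter_upwards [key] with ω hω
    simp only [Pi.add_apply]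
    rw [Real.norm_eq_abs, abs_le]
    constructor
    · have := neg_abs_le (L ω)
      have := le_abs_self (U ω)
      have := abs_nonneg (U ω)
      linarith [hω.2.1]
    · have := le_abs_self (U ω)
      have := abs_nonneg (L ω)
      linarith [hω.2.2]


end
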